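/- Let G be a locally compact Hausdorff abelian topological group and let C, C' be any two compact open subgroups of G. If μ and μ' are the Haar measures with μ(C) = 1 and μ'(C') = 1, then there exists a positive rational number q with μ' = q • μ. -/

import Mathlib

open MeasureTheory Pointwise NNReal ENNReal

/-- Key lemma: if `D ≤ K` are additive subgroups with `D` open and `K` compact, then
`μ K = n * μ D` for some positive natural `n`, for any left-invariant measure `μ`. -/
lemma measure_eq_nat_mul_of_le
    {G : Type*} [AddCommGroup G] [TopologicalSpace G] [IsTopologicalAddGroup G]
    [MeasurableSpace G] [BorelSpace G]
    (μ : Measure G) [μ.IsAddLeftInvariant]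
    (D K : AddSubgroup G) (hDK : D ≤ K)
    (hKc : IsCompact (K : Set G)) (hDo : IsOpen (D : Set G)) :
    ∃ n : ℕ, 0 < n ∧ μ (K : Set G) = n * μ (D : Set G) := by
  haveI : DiscreteTopology (G ⧸ D) := QuotientAddGroup.discreteTopology hDo
  set π : G → G ⧸ D := QuotientAddGroup.mk with hπ
  have hπc : Continuous π := continuous_quot_mk
  have hTc : IsCompact (π '' (K : Set G)) := hKc.image hπc
  have hTfin : (π '' (K : Set G)).Finite := hTc.finite_of_discrete
  -- each fiber over a point of the image is a coset contained in K
  have fiber_eq : ∀ x : G, π ⁻¹' {π x} = x +ᵥ (D : Set G) := by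
    intro x
    ext y
    simp only [Set.mem_preimage, Set.mem_singleton_iff, hπ]
    rw [Set.mem_vadd_set_iff_neg_vadd_mem, eq_comm, QuotientAddGroup.eq]
    rfl
  have fiber_sub : ∀ y ∈ π '' (K : Set G), π ⁻¹' {y} ⊆ (K : Set G) := by
    rintro y ⟨x, hxK, rfl⟩ z hz
    rw [fiber_eq x] at hz
    obtain ⟨d, hd, rfl⟩ := hz
    exact K.add_mem hxK (hDK hd)
  have fiber_meas : ∀ y : G ⧸ D, MeasurableSet (π ⁻¹' {y}) := by
    intro y
    induction y using QuotientAddGroup.induction_on with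
    | H x =>
      rw [fiber_eq x]
      exact (hDo.vadd x).measurableSet
  have fiber_measure : ∀ y : G ⧸ D, μ (π ⁻¹' {y}) = μ (D : Set G) := by
    intro y
    induction y using QuotientAddGroup.induction_on with
    | H x =>
      rw [fiber_eq x]
      simp
  -- decompose K as finite disjoint union of fibers
  have hK_eq : (K : Set G) = ⋃ y ∈ hTfin.toFinset, π ⁻¹' {y} := by
    ext x
    constructor
    · intro hx
      exact Set.mem_biUnion (hTfin.mem_toFinset.mpr ⟨x, hx, rfl⟩) rfl
    · intro hx
      obtain ⟨y, hy, hxy⟩ := Set.mem_iUnion₂.mp hx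
      exact fiber_sub y (by simpa using hy) hxy
  have hdisj : (hTfin.toFinset : Set (G ⧸ D)).PairwiseDisjoint (fun y => π ⁻¹' {y}) := by
    intro a _ b _ hab
    exact Set.disjoint_left.mpr fun x hxa hxb => hab (by
      simp only [Set.mem_preimage, Set.mem_singleton_iff] at hxa hxb
      rw [← hxa, ← hxb])
  have hμK : μ (K : Set G) = ∑ y ∈ hTfin.toFinset, μ (π ⁻¹' {y}) := by
    conv_lhs => rw [hK_eq]
    exact measure_biUnion_finset hdisj fun y _ => fiber_meas y
  refine ⟨hTfin.toFinset.card, ?_, ?_⟩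
  · rw [Finset.card_pos, Finset.nonempty_iff_ne_empty]
    intro h
    have : (0 : G) ∈ (K : Set G) := K.zero_mem
    have : π 0 ∈ π '' (K : Set G) := ⟨0, this, rfl⟩
    rw [← hTfin.mem_toFinset, h] at this
    exact absurd this (Finset.notMem_empty _)
  · rw [hμK]
    rw [Finset.sum_congr rfl fun y _ => fiber_measure y, Finset.sum_const, nsmul_eq_mul]

/-- For any two compact open subgroups `C`, `C'` of a locally compact
Hausdorff abelian topological group `G`, the Haar measures normalized by `μ(C) = 1`
and `μ'(C') = 1` differ by a positive rational factor. -/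
theorem haar_normalizations_differ_by_rational
    {G : Type*} [AddCommGroup G] [TopologicalSpace G] [IsTopologicalAddGroup G]
    [LocallyCompactSpace G] [T2Space G] [MeasurableSpace G] [BorelSpace G]
    (C C' : AddSubgroup G)
    (hCc : IsCompact (C : Set G)) (hCo : IsOpen (C : Set G))
    (hC'c : IsCompact (C' : Set G)) (hC'o : IsOpen (C' : Set G))
    (μ μ' : Measure G) [μ.IsAddHaarMeasure] [μ.Regular]
    [μ'.IsAddHaarMeasure] [μ'.Regular]
    (hμ : μ (C : Set G) = 1) (hμ' : μ' (C' : Set G) = 1) :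
    ∃ q : ℚ, 0 < q ∧ μ' = ENNReal.ofReal (q : ℝ) • μ := by
  set D : AddSubgroup G := C ⊓ C' with hD
  have hDo : IsOpen (D : Set G) := by
    rw [hD]; show IsOpen ((C : Set G) ∩ C')
    exact hCo.inter hC'o
  obtain ⟨n, hn, hnμ⟩ := measure_eq_nat_mul_of_le μ D C inf_le_left hCc hDo
  obtain ⟨m, hm, hmμ'⟩ := measure_eq_nat_mul_of_le μ' D C' inf_le_right hC'c hDo
  have huniq : μ' = (Measure.addHaarScalarFactor μ' μ) • μ :=
    Measure.isAddLeftInvariant_eq_smul_of_regular μ' μ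
  set c : ℝ≥0 := Measure.addHaarScalarFactor μ' μ with hc
  -- μ D = 1 / n
  have hn0 : (n : ℝ≥0∞) ≠ 0 := Nat.cast_ne_zero.mpr hn.ne'
  have hm0 : (m : ℝ≥0∞) ≠ 0 := Nat.cast_ne_zero.mpr hm.ne'
  have hμD : μ (D : Set G) = (n : ℝ≥0∞)⁻¹ := by
    rw [hμ] at hnμ
    exact ENNReal.eq_inv_of_mul_eq_one_left (by rw [mul_comm]; exact hnμ.symm)
  have hμ'D : μ' (D : Set G) = (m : ℝ≥0∞)⁻¹ := by
    rw [hμ'] at hmμ'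
    exact ENNReal.eq_inv_of_mul_eq_one_left (by rw [mul_comm]; exact hmμ'.symm)
  have hμ'D2 : μ' (D : Set G) = (c : ℝ≥0∞) * μ (D : Set G) := by
    conv_lhs => rw [huniq]
    rw [Measure.smul_apply, ENNReal.smul_def, smul_eq_mul]
  have hceq : (c : ℝ≥0∞) = (n : ℝ≥0∞) * (m : ℝ≥0∞)⁻¹ := by
    rw [hμ'D, hμD] at hμ'D2
    calc (c : ℝ≥0∞) = ((c : ℝ≥0∞) * (n:ℝ≥0∞)⁻¹) * n := by
          rw [mul_assoc, ENNReal.inv_mul_cancel hn0 (ENNReal.natCast_ne_top n), mul_one]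
      _ = (m : ℝ≥0∞)⁻¹ * n := by rw [← hμ'D2]
      _ = (n : ℝ≥0∞) * (m : ℝ≥0∞)⁻¹ := mul_comm _ _
  refine ⟨(n : ℚ) / m, by positivity, ?_⟩
  have hq : ENNReal.ofReal (((n : ℚ) / m : ℚ) : ℝ) = (c : ℝ≥0∞) := by
    rw [hceq]
    push_cast
    rw [ENNReal.ofReal_div_of_pos (by exact_mod_cast hm)]
    rw [ENNReal.ofReal_natCast, ENNReal.ofReal_natCast, div_eq_mul_inv]
  rw [hq, huniq, ENNReal.smul_def]
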